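/- Let F be a strongly regular CDF on [0,1] (continuously differentiable density f > 0, f nondecreasing and log-concave), with ψ(θ) = θ − (1 − F(θ))/f(θ) and W(θ) = (1 − F(θ))ψ′(θ) − f(θ)ψ(θ). Let k ∈ [0,1) satisfy 0 ≤ W(k) ≤ 1 − F(k), and let q_k = 1_{[k,1]} be the threshold allocation. Then q_k maximizes the surplus of the lowest type subject to delivering total surplus at least that of q_k: q_k attains the maximum of ∫₀¹ (−W(θ)) q(θ) dθ over all nondecreasing measurable q : [0,1] → [0,1] satisfying ∫₀¹ (1 − F(θ) − W(θ)) q(θ) dθ ≥ ∫_k¹ (1 − F(θ) − W(θ)) dθ. -/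

import Mathlib

set_option maxHeartbeats 2000000

open MeasureTheory

lemma mono_hasDerivAt_nonneg {φ : ℝ → ℝ} {a b x d : ℝ}
    (hm : MonotoneOn φ (Set.Icc a b)) (hab : a < b) (hx : x ∈ Set.Icc a b)
    (hd : HasDerivAt φ d x) : 0 ≤ d := by
  have hslope := hasDerivAt_iff_tendsto_slope.mp hd
  rcases lt_or_eq_of_le hx.2 with hxb | hxb
  · have T : Filter.Tendsto (slope φ x) (nhdsWithin x (Set.Ioi x)) (nhds d) :=
      hslope.mono_left (nhdsWithin_mono x (fun t ht => ne_of_gt ht))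
    refine ge_of_tendsto T ?_
    filter_upwards [Ioo_mem_nhdsGT_of_mem (Set.mem_Ico.mpr ⟨le_rfl, hxb⟩)] with t ht
    rw [slope_def_field]
    have h1 : φ x ≤ φ t := hm hx ⟨le_trans hx.1 (le_of_lt ht.1), le_of_lt ht.2⟩ (le_of_lt ht.1)
    have h2 : 0 < t - x := by linarith [ht.1]
    exact div_nonneg (by linarith) (le_of_lt h2)
  · have hax : a < x := by rw [hxb]; exact hab
    have T : Filter.Tendsto (slope φ x) (nhdsWithin x (Set.Iio x)) (nhds d) :=
      hslope.mono_left (nhdsWithin_mono x (fun t ht => ne_of_lt ht))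
    refine ge_of_tendsto T ?_
    filter_upwards [Ioo_mem_nhdsLT_of_mem (Set.mem_Ioc.mpr ⟨hax, le_rfl⟩)] with t ht
    rw [slope_def_field]
    have h1 : φ t ≤ φ x := hm ⟨le_of_lt ht.1, le_trans (le_of_lt ht.2) hx.2⟩ hx (le_of_lt ht.2)
    have h2 : t - x < 0 := by linarith [ht.2]
    exact div_nonneg_of_nonpos (by linarith) (le_of_lt h2)

theorem threshold_maximizes_lowest_type_surplus
    (F f f' : ℝ → ℝ)
    (hF0 : F 0 = 0) (hF1 : F 1 = 1)
    (hFd : ∀ θ ∈ Set.Icc (0:ℝ) 1, HasDerivAt F (f θ) θ)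
    (hfd : ∀ θ ∈ Set.Icc (0:ℝ) 1, HasDerivAt f (f' θ) θ)
    (hf'cont : ContinuousOn f' (Set.Icc 0 1))
    (hfpos : ∀ θ ∈ Set.Icc (0:ℝ) 1, 0 < f θ)
    (hfmono : MonotoneOn f (Set.Icc 0 1))
    (hlogconc : AntitoneOn (fun θ => f' θ / f θ) (Set.Icc 0 1))
    (ψ : ℝ → ℝ) (hψ : ∀ θ, ψ θ = θ - (1 - F θ) / f θ)
    (W : ℝ → ℝ) (hW : ∀ θ, W θ = (1 - F θ) * deriv ψ θ - f θ * ψ θ)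
    (k : ℝ) (hk : k ∈ Set.Ico (0:ℝ) 1) (hWk0 : 0 ≤ W k) (hWk1 : W k ≤ 1 - F k) :
    ∀ q : ℝ → ℝ, MonotoneOn q (Set.Icc 0 1) → (∀ θ ∈ Set.Icc (0:ℝ) 1, q θ ∈ Set.Icc (0:ℝ) 1) →
      (∫ θ in Set.Icc k 1, (1 - F θ - W θ)) ≤ (∫ θ in Set.Icc (0:ℝ) 1, (1 - F θ - W θ) * q θ) →
      (∫ θ in Set.Icc (0:ℝ) 1, (-W θ) * q θ) ≤ (∫ θ in Set.Icc k 1, (-W θ)) := by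
  intro q hqmono hq01 hcon
  have h01 : (0:ℝ) < 1 := one_pos
  set I1 : Set ℝ := Set.Icc (0:ℝ) 1 with hI1
  have hk1 : k ∈ I1 := ⟨hk.1, le_of_lt hk.2⟩
  have hkIcc : Set.Icc k 1 ⊆ I1 := Set.Icc_subset_Icc hk.1 le_rfl
  obtain ⟨Wf, hWfdef⟩ : ∃ x : ℝ → ℝ, x = fun θ => 3*(1-F θ) + (1-F θ)^2 * f' θ / (f θ)^2 - f θ * θ := ⟨_, rfl⟩
  obtain ⟨uf, hufdef⟩ : ∃ x : ℝ → ℝ, x = fun θ => f θ * θ - 2*(1-F θ) - (1-F θ)^2 * f' θ / (f θ)^2 := ⟨_, rfl⟩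
  have hψfun : ψ = fun t => t - (1 - F t) / f t := funext hψ
  have hWeq : ∀ θ ∈ I1, W θ = Wf θ := by
    intro θ hθ
    have hfθ : f θ ≠ 0 := ne_of_gt (hfpos θ hθ)
    have h1 : HasDerivAt (fun t => (1:ℝ) - F t) (-(f θ)) θ := (hFd θ hθ).const_sub 1
    have h2 := h1.div (hfd θ hθ) hfθ
    have h3 := (hasDerivAt_id θ).sub h2
    have h4 : HasDerivAt ψ (1 - (-f θ * f θ - (1 - F θ) * f' θ) / f θ ^ 2) θ := by
      rw [hψfun]; exact h3
    rw [hW θ, h4.deriv, hψ θ]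
    simp only [hWfdef]
    field_simp
    ring
  have hueq : ∀ θ ∈ I1, 1 - F θ - W θ = uf θ := by
    intro θ hθ; rw [hWeq θ hθ]; simp only [hWfdef, hufdef]; ring
  have hFcont : ContinuousOn F I1 := fun θ hθ => (hFd θ hθ).continuousAt.continuousWithinAt
  have hfcont : ContinuousOn f I1 := fun θ hθ => (hfd θ hθ).continuousAt.continuousWithinAt
  have h1I : (1:ℝ) ∈ I1 := Set.right_mem_Icc.mpr h01.le
  have hFstrict : StrictMonoOn F I1 := by
    apply strictMonoOn_of_deriv_pos (convex_Icc 0 1) hFcont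
    intro x hx
    rw [interior_Icc] at hx
    rw [(hFd x (Set.mem_Icc_of_Ioo hx)).deriv]
    exact hfpos x (Set.mem_Icc_of_Ioo hx)
  have hFmono : MonotoneOn F I1 := hFstrict.monotoneOn
  have hFle1 : ∀ θ ∈ I1, F θ ≤ 1 := by
    intro θ hθ
    have := hFmono hθ h1I hθ.2
    rwa [hF1] at this
  have hf'0 : ∀ θ ∈ I1, 0 ≤ f' θ := fun θ hθ => mono_hasDerivAt_nonneg hfmono h01 hθ (hfd θ hθ)
  have hmid : ∀ x ∈ I1, ∀ y ∈ I1, x ≤ y →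
      (1-F y)^2 * f' y / (f y)^2 ≤ (1-F x)^2 * f' x / (f x)^2 := by
    intro x hx y hy hxy
    have hfx := hfpos x hx
    have hfy := hfpos y hy
    have e : ∀ z ∈ I1, (1-F z)^2 * f' z / (f z)^2
        = ((1-F z)*(1-F z)) * ((f' z / f z) * (1/f z)) := by
      intro z hz
      have hz0 : f z ≠ 0 := ne_of_gt (hfpos z hz)
      field_simp
    rw [e x hx, e y hy]
    have g1 : 0 ≤ 1 - F y := by linarith [hFle1 y hy]
    have g2 : 1 - F y ≤ 1 - F x := by linarith [hFmono hx hy hxy]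
    have t2 : f' y / f y ≤ f' x / f x := hlogconc hx hy hxy
    have t1 : 0 ≤ f' y / f y := div_nonneg (hf'0 y hy) (le_of_lt hfy)
    have t1x : 0 ≤ f' x / f x := div_nonneg (hf'0 x hx) (le_of_lt hfx)
    have t3 : 1/f y ≤ 1/f x := one_div_le_one_div_of_le hfx (hfmono hx hy hxy)
    have t4 : 0 ≤ 1/f y := by positivity
    have p1 : (f' y / f y) * (1/f y) ≤ (f' x / f x) * (1/f x) := mul_le_mul t2 t3 t4 t1x
    have p0 : 0 ≤ (f' y / f y) * (1/f y) := mul_nonneg t1 t4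
    have p2 : (1-F y)*(1-F y) ≤ (1-F x)*(1-F x) := mul_le_mul g2 g2 g1 (le_trans g1 g2)
    exact mul_le_mul p2 p1 p0 (mul_nonneg (le_trans g1 g2) (le_trans g1 g2))
  have hWanti : AntitoneOn Wf I1 := by
    intro x hx y hy hxy
    have h1 := hmid x hx y hy hxy
    have h2 : f x * x ≤ f y * y :=
      mul_le_mul (hfmono hx hy hxy) hxy hx.1 (le_of_lt (hfpos y hy))
    have h3 : F x ≤ F y := hFmono hx hy hxy
    simp only [hWfdef]
    linarith
  have humono : MonotoneOn uf I1 := by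
    intro x hx y hy hxy
    have h1 := hmid x hx y hy hxy
    have h2 : f x * x ≤ f y * y :=
      mul_le_mul (hfmono hx hy hxy) hxy hx.1 (le_of_lt (hfpos y hy))
    have h3 : F x ≤ F y := hFmono hx hy hxy
    simp only [hufdef]
    linarith
  -- KEY: uf has no nondegenerate interval of zeros
  have hflat : ∀ a ∈ I1, ∀ b ∈ I1, a < b → (∀ x ∈ Set.Icc a b, uf x = 0) → False := by
    intro a ha b hb hab h0
    have hsub : Set.Icc a b ⊆ I1 := Set.Icc_subset_Icc ha.1 hb.2
    rcases eq_or_lt_of_le hb.2 with hb1 | hb1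
    · -- b = 1
      have h1mem : (1:ℝ) ∈ Set.Icc a b := ⟨by linarith [ha.1, hab, hb.2], le_of_eq hb1.symm⟩
      have hz := h0 1 h1mem
      have hf1 := hfpos 1 h1I
      simp only [hufdef, hF1] at hz
      norm_num at hz
      linarith
    · -- b < 1
      have hGb : 0 < 1 - F b := by
        have := hFstrict hb h1I hb1
        rw [hF1] at this
        linarith
      have hGpos : ∀ x ∈ Set.Icc a b, 0 < 1 - F x := by
        intro x hx
        have := hFmono (hsub hx) hb hx.2
        linarith
      set θ₀ : ℝ := (a+b)/2 with hθ₀def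
      have hθ₀ : θ₀ ∈ Set.Ioo a b := ⟨by simp only [hθ₀def]; linarith, by simp only [hθ₀def]; linarith⟩
      have hθmem : θ₀ ∈ Set.Icc a b := ⟨le_of_lt hθ₀.1, le_of_lt hθ₀.2⟩
      have hθI : θ₀ ∈ I1 := hsub hθmem
      have hfv := hfpos θ₀ hθI
      have hG := hGpos θ₀ hθmem
      have hf'v := hf'0 θ₀ hθI
      have hθ0 : 0 ≤ θ₀ := hθI.1
      obtain ⟨r, hrdef⟩ : ∃ x : ℝ → ℝ, x = fun θ => (f θ * θ - 2*(1-F θ)) * f θ / (1-F θ)^2 := ⟨_, rfl⟩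
      have hr_eq : ∀ x ∈ Set.Icc a b, r x = f' x / f x := by
        intro x hx
        have hfx : f x ≠ 0 := ne_of_gt (hfpos x (hsub hx))
        have hGx : (1:ℝ) - F x ≠ 0 := ne_of_gt (hGpos x hx)
        have h5 := h0 x hx
        simp only [hufdef] at h5
        simp only [hrdef]
        field_simp at h5 ⊢
        nlinarith [h5]
      have hr_anti : MonotoneOn (fun θ => -r θ) (Set.Icc a b) := by
        intro x hx y hy hxy
        simp only [neg_le_neg_iff]
        rw [hr_eq x hx, hr_eq y hy]
        exact hlogconc (hsub hx) (hsub hy) hxy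
      have hnum : HasDerivAt (fun θ => (f θ * θ - 2*(1-F θ)) * f θ)
          ((f' θ₀ * θ₀ + f θ₀ * 1 - 2 * -f θ₀) * f θ₀
            + (f θ₀ * θ₀ - 2*(1-F θ₀)) * f' θ₀) θ₀ :=
        (((hfd θ₀ hθI).mul (hasDerivAt_id θ₀)).sub
          (((hFd θ₀ hθI).const_sub 1).const_mul 2)).mul (hfd θ₀ hθI)
      have hden : HasDerivAt (fun θ => (1-F θ)^2)
          ((2:ℕ) * (1-F θ₀)^1 * -f θ₀) θ₀ := ((hFd θ₀ hθI).const_sub 1).pow 2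
      have hGne : ((1:ℝ)-F θ₀)^2 ≠ 0 := pow_ne_zero 2 (ne_of_gt hG)
      have hr' := hnum.div hden hGne
      have hr'' : HasDerivAt r
          ((((f' θ₀ * θ₀ + f θ₀ * 1 - 2 * -f θ₀) * f θ₀
              + (f θ₀ * θ₀ - 2*(1-F θ₀)) * f' θ₀) * (1-F θ₀)^2
            - (f θ₀ * θ₀ - 2*(1-F θ₀)) * f θ₀ * ((2:ℕ) * (1-F θ₀)^1 * -f θ₀))
            / ((1-F θ₀)^2)^2) θ₀ := by rw [hrdef]; exact hr'
      have hd0 := mono_hasDerivAt_nonneg hr_anti hab hθmem hr''.neg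
      have hpos : (0:ℝ) < (((1:ℝ)-F θ₀)^2)^2 := by positivity
      have hXle : (((f' θ₀ * θ₀ + f θ₀ * 1 - 2 * -f θ₀) * f θ₀
              + (f θ₀ * θ₀ - 2*(1-F θ₀)) * f' θ₀) * (1-F θ₀)^2
            - (f θ₀ * θ₀ - 2*(1-F θ₀)) * f θ₀ * ((2:ℕ) * (1-F θ₀)^1 * -f θ₀)) ≤ 0 := by
        have hXY : (((f' θ₀ * θ₀ + f θ₀ * 1 - 2 * -f θ₀) * f θ₀
              + (f θ₀ * θ₀ - 2*(1-F θ₀)) * f' θ₀) * (1-F θ₀)^2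
            - (f θ₀ * θ₀ - 2*(1-F θ₀)) * f θ₀ * ((2:ℕ) * (1-F θ₀)^1 * -f θ₀))
            / ((1-F θ₀)^2)^2 ≤ 0 := by linarith
        rcases div_nonpos_iff.mp hXY with ⟨_, h2⟩ | ⟨h1, _⟩
        · linarith
        · exact h1
      have h5 : (1-F θ₀)^2 * f' θ₀ = (f θ₀ * θ₀ - 2*(1-F θ₀)) * (f θ₀)^2 := by
        have h6 := h0 θ₀ hθmem
        simp only [hufdef] at h6
        field_simp at h6
        linarith
      have hs : 0 ≤ f θ₀ * θ₀ - 2*(1-F θ₀) := by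
        nlinarith [h5, mul_pos hfv hfv, mul_nonneg (mul_nonneg (le_of_lt hG) (le_of_lt hG)) hf'v]
      push_cast at hXle
      have hE : ((f' θ₀ * θ₀ + f θ₀ * 1 - 2 * -f θ₀) * f θ₀
              + (f θ₀ * θ₀ - 2*(1-F θ₀)) * f' θ₀) * (1-F θ₀)^2
            - (f θ₀ * θ₀ - 2*(1-F θ₀)) * f θ₀ * ((2:ℝ) * (1-F θ₀)^1 * -f θ₀)
          = (f θ₀ * θ₀ + (f θ₀ * θ₀ - 2*(1-F θ₀))) * ((1-F θ₀)^2 * f' θ₀)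
            + 3*(f θ₀)^2*(1-F θ₀)^2
            + 2*(1-F θ₀)*(f θ₀)^2*(f θ₀ * θ₀ - 2*(1-F θ₀)) := by ring
      rw [h5] at hE
      have hp1 : 0 ≤ (f θ₀ * θ₀ + (f θ₀ * θ₀ - 2*(1-F θ₀)))
          * ((f θ₀ * θ₀ - 2*(1-F θ₀)) * (f θ₀)^2) := by
        have : 0 ≤ f θ₀ * θ₀ := mul_nonneg (le_of_lt hfv) hθ0
        exact mul_nonneg (by linarith) (mul_nonneg hs (sq_nonneg _))
      have hp2 : 0 < 3*(f θ₀)^2*(1-F θ₀)^2 := by positivity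
      have hp3 : 0 ≤ 2*(1-F θ₀)*(f θ₀)^2*(f θ₀ * θ₀ - 2*(1-F θ₀)) :=
        mul_nonneg (mul_nonneg (by linarith) (sq_nonneg _)) hs
      linarith [hXle, hE, hp1, hp2, hp3]
  -- clamp of q
  obtain ⟨c, hcdef⟩ : ∃ x : ℝ → ℝ, x = fun θ => max 0 (min 1 θ) := ⟨_, rfl⟩
  have hcmem : ∀ θ, c θ ∈ I1 := by
    intro θ
    simp only [hcdef]
    exact ⟨le_max_left _ _, max_le h01.le (min_le_left _ _)⟩
  have hceq : ∀ θ ∈ I1, c θ = θ := by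
    intro θ hθ
    simp only [hcdef]
    rw [min_eq_right hθ.2, max_eq_right hθ.1]
  have hcmono : Monotone c := by
    intro x y hxy
    simp only [hcdef]
    exact max_le_max le_rfl (min_le_min le_rfl hxy)
  obtain ⟨Q, hQdef⟩ : ∃ x : ℝ → ℝ, x = fun θ => q (c θ) := ⟨_, rfl⟩
  have hQeq : ∀ θ ∈ I1, Q θ = q θ := by
    intro θ hθ
    simp only [hQdef]
    rw [hceq θ hθ]
  have hQmono : Monotone Q := by
    intro x y hxy
    simp only [hQdef]
    exact hqmono (hcmem x) (hcmem y) (hcmono hxy)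
  have hQmeas : Measurable Q := hQmono.measurable
  have hQ01 : ∀ θ, Q θ ∈ Set.Icc (0:ℝ) 1 := by
    intro θ
    simp only [hQdef]
    exact hq01 (c θ) (hcmem θ)
  obtain ⟨χ, hχdef⟩ : ∃ x : ℝ → ℝ, x = (Set.Icc k 1).indicator (fun _ => (1:ℝ)) := ⟨_, rfl⟩
  have hχmeas : Measurable χ := by
    rw [hχdef]
    exact measurable_const.indicator measurableSet_Icc
  have hχ01 : ∀ θ, χ θ ∈ Set.Icc (0:ℝ) 1 := by
    intro θ
    simp only [hχdef, Set.indicator_apply]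
    split <;> norm_num
  obtain ⟨h, hhdef⟩ : ∃ x : ℝ → ℝ, x = fun θ => Q θ - χ θ := ⟨_, rfl⟩
  have hhmeas : Measurable h := by
    rw [hhdef]
    exact hQmeas.sub hχmeas
  have hhbdd : ∀ θ, |h θ| ≤ 1 := by
    intro θ
    have h1 := hQ01 θ
    have h2 := hχ01 θ
    rw [abs_le]
    constructor
    · simp only [hhdef]; linarith [h1.1, h2.2]
    · simp only [hhdef]; linarith [h1.2, h2.1]
  have hfin : volume I1 < ⊤ := measure_Icc_lt_top
  have hInt_h : IntegrableOn h I1 := by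
    refine Integrable.mono' (g := fun _ => (1:ℝ))
      (integrableOn_const hfin.ne) hhmeas.aestronglyMeasurable ?_
    exact Filter.Eventually.of_forall (fun θ => by simpa [Real.norm_eq_abs] using hhbdd θ)
  have hIntMul : ∀ φ : ℝ → ℝ, ContinuousOn φ I1 → ∀ g : ℝ → ℝ, Measurable g →
      (∀ θ, |g θ| ≤ 1) → IntegrableOn (fun θ => φ θ * g θ) I1 := by
    intro φ hφ g hg hgb
    obtain ⟨C, hC⟩ := (isCompact_Icc).exists_bound_of_continuousOn hφ
    refine Integrable.mono' (g := fun _ => C)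
      (integrableOn_const hfin.ne)
      ((hφ.aestronglyMeasurable measurableSet_Icc).mul hg.aestronglyMeasurable) ?_
    filter_upwards [ae_restrict_mem measurableSet_Icc] with θ hθ
    have h1 : ‖φ θ * g θ‖ = ‖φ θ‖ * ‖g θ‖ := norm_mul _ _
    have h2 := hC θ hθ
    have h3 : ‖g θ‖ ≤ 1 := by simpa [Real.norm_eq_abs] using hgb θ
    have h4 : (0:ℝ) ≤ ‖φ θ‖ := norm_nonneg _
    have h5 : (0:ℝ) ≤ ‖g θ‖ := norm_nonneg _
    nlinarith
  have hQb : ∀ θ, |Q θ| ≤ 1 := by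
    intro θ
    have := hQ01 θ
    rw [abs_le]
    exact ⟨by linarith [this.1], this.2⟩
  have hχb : ∀ θ, |χ θ| ≤ 1 := by
    intro θ
    have := hχ01 θ
    rw [abs_le]
    exact ⟨by linarith [this.1], this.2⟩
  have hWfc : ContinuousOn Wf I1 := by
    have h1 : ContinuousOn (fun θ => (1 - F θ)^2 * f' θ / (f θ)^2) I1 :=
      (((continuousOn_const.sub hFcont).pow 2).mul hf'cont).div (hfcont.pow 2)
        (fun θ hθ => pow_ne_zero 2 (ne_of_gt (hfpos θ hθ)))
    simp only [hWfdef]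
    exact ((continuousOn_const.mul (continuousOn_const.sub hFcont)).add h1).sub
      (hfcont.mul continuousOn_id)
  have hufc : ContinuousOn uf I1 := by
    have h1 : ContinuousOn (fun θ => (1 - F θ)^2 * f' θ / (f θ)^2) I1 :=
      (((continuousOn_const.sub hFcont).pow 2).mul hf'cont).div (hfcont.pow 2)
        (fun θ hθ => pow_ne_zero 2 (ne_of_gt (hfpos θ hθ)))
    simp only [hufdef]
    exact ((hfcont.mul continuousOn_id).sub
      (continuousOn_const.mul (continuousOn_const.sub hFcont))).sub h1
  have hIWQ : IntegrableOn (fun θ => Wf θ * Q θ) I1 := hIntMul Wf hWfc Q hQmeas hQb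
  have hIWχ : IntegrableOn (fun θ => Wf θ * χ θ) I1 := hIntMul Wf hWfc χ hχmeas hχb
  have hIWh : IntegrableOn (fun θ => Wf θ * h θ) I1 := hIntMul Wf hWfc h hhmeas hhbdd
  have hIuQ : IntegrableOn (fun θ => uf θ * Q θ) I1 := hIntMul uf hufc Q hQmeas hQb
  have hIuχ : IntegrableOn (fun θ => uf θ * χ θ) I1 := hIntMul uf hufc χ hχmeas hχb
  have hIuh : IntegrableOn (fun θ => uf θ * h θ) I1 := hIntMul uf hufc h hhmeas hhbdd
  have hIndRw : ∀ φ : ℝ → ℝ, (∫ θ in Set.Icc k 1, φ θ) = ∫ θ in I1, φ θ * χ θ := by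
    intro φ
    have h1 : (fun θ => φ θ * χ θ) = (Set.Icc k 1).indicator φ := by
      funext θ
      by_cases hθ : θ ∈ Set.Icc k 1
      · simp [hχdef, Set.indicator_of_mem hθ]
      · simp [hχdef, Set.indicator_of_notMem hθ]
    rw [h1, setIntegral_indicator measurableSet_Icc,
      Set.inter_eq_self_of_subset_right hkIcc]
  -- the constraint
  have hconW : (∫ θ in I1, uf θ * χ θ) ≤ ∫ θ in I1, uf θ * Q θ := by
    calc (∫ θ in I1, uf θ * χ θ) = ∫ θ in Set.Icc k 1, uf θ := (hIndRw uf).symm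
      _ = ∫ θ in Set.Icc k 1, (1 - F θ - W θ) :=
          setIntegral_congr_fun measurableSet_Icc (fun θ hθ => (hueq θ (hkIcc hθ)).symm)
      _ ≤ ∫ θ in I1, (1 - F θ - W θ) * q θ := hcon
      _ = ∫ θ in I1, uf θ * Q θ :=
          setIntegral_congr_fun measurableSet_Icc
            (fun θ hθ => by rw [hueq θ hθ, hQeq θ hθ])
  have hsplitU : (∫ θ in I1, uf θ * h θ)
      = (∫ θ in I1, uf θ * Q θ) - ∫ θ in I1, uf θ * χ θ := by
    have heq : (fun θ => uf θ * h θ) = fun θ => uf θ * Q θ - uf θ * χ θ := by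
      funext θ; simp only [hhdef]; ring
    rw [heq, integral_sub hIuQ hIuχ]
  have hIU : 0 ≤ ∫ θ in I1, uf θ * h θ := by rw [hsplitU]; linarith
  -- sign pattern of h
  have hsign1 : ∀ θ ∈ I1, θ < k → 0 ≤ h θ := by
    intro θ hθ hθk
    have hχ0 : χ θ = 0 := by
      rw [hχdef]
      exact Set.indicator_of_notMem (fun hmem => absurd hmem.1 (not_le.mpr hθk)) _
    simp only [hhdef, hχ0, sub_zero]
    exact (hQ01 θ).1
  have hsign2 : ∀ θ ∈ I1, k ≤ θ → h θ ≤ 0 := by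
    intro θ hθ hkθ
    have hχ1 : χ θ = 1 := by
      rw [hχdef]
      exact Set.indicator_of_mem (Set.mem_Icc.mpr ⟨hkθ, hθ.2⟩) _
    simp only [hhdef, hχ1]
    linarith [(hQ01 θ).2]
  -- comparison integrals
  have hcmpW : Wf k * (∫ θ in I1, h θ) ≤ ∫ θ in I1, Wf θ * h θ := by
    have hnn : 0 ≤ ∫ θ in I1, (Wf θ - Wf k) * h θ := by
      apply setIntegral_nonneg measurableSet_Icc
      intro θ hθ
      rcases lt_or_ge θ k with hlt | hge
      · exact mul_nonneg (sub_nonneg.mpr (hWanti hθ hk1 (le_of_lt hlt))) (hsign1 θ hθ hlt)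
      · have h1 : Wf θ - Wf k ≤ 0 := sub_nonpos.mpr (hWanti hk1 hθ hge)
        have h2 := hsign2 θ hθ hge
        nlinarith
    have heq : (fun θ => (Wf θ - Wf k) * h θ) = fun θ => Wf θ * h θ - Wf k * h θ := by
      funext θ; ring
    rw [heq, integral_sub hIWh (hInt_h.const_mul (Wf k)), integral_const_mul] at hnn
    linarith
  have hcmpU : (∫ θ in I1, uf θ * h θ) ≤ uf k * ∫ θ in I1, h θ := by
    have hnn : 0 ≤ ∫ θ in I1, (uf k - uf θ) * h θ := by
      apply setIntegral_nonneg measurableSet_Icc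
      intro θ hθ
      rcases lt_or_ge θ k with hlt | hge
      · exact mul_nonneg (sub_nonneg.mpr (humono hθ hk1 (le_of_lt hlt))) (hsign1 θ hθ hlt)
      · have h1 : uf k - uf θ ≤ 0 := sub_nonpos.mpr (humono hk1 hθ hge)
        have h2 := hsign2 θ hθ hge
        nlinarith
    have heq : (fun θ => (uf k - uf θ) * h θ) = fun θ => uf k * h θ - uf θ * h θ := by
      funext θ; ring
    rw [heq, integral_sub (hInt_h.const_mul (uf k)) hIuh, integral_const_mul] at hnn
    linarith
  have hufk0 : 0 ≤ uf k := by rw [← hueq k hk1]; linarith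
  have hWfk0 : 0 ≤ Wf k := by rw [← hWeq k hk1]; exact hWk0
  -- it suffices to show 0 ≤ ∫ Wf * h
  suffices hfinal : 0 ≤ ∫ θ in I1, Wf θ * h θ by
    have hsplitW : (∫ θ in I1, Wf θ * h θ)
        = (∫ θ in I1, Wf θ * Q θ) - ∫ θ in I1, Wf θ * χ θ := by
      have heq : (fun θ => Wf θ * h θ) = fun θ => Wf θ * Q θ - Wf θ * χ θ := by
        funext θ; simp only [hhdef]; ring
      rw [heq, integral_sub hIWQ hIWχ]
    have hQχ : (∫ θ in I1, Wf θ * χ θ) ≤ ∫ θ in I1, Wf θ * Q θ := by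
      rw [hsplitW] at hfinal; linarith
    calc (∫ θ in I1, (-W θ) * q θ)
        = ∫ θ in I1, -(Wf θ * Q θ) :=
          setIntegral_congr_fun measurableSet_Icc
            (fun θ hθ => by rw [hWeq θ hθ, hQeq θ hθ]; ring)
      _ = -(∫ θ in I1, Wf θ * Q θ) := integral_neg _
      _ ≤ -(∫ θ in I1, Wf θ * χ θ) := by linarith
      _ = ∫ θ in I1, -(Wf θ * χ θ) := (integral_neg _).symm
      _ = ∫ θ in I1, (-Wf θ) * χ θ := by simp only [neg_mul]
      _ = ∫ θ in Set.Icc k 1, -Wf θ := (hIndRw (fun θ => -Wf θ)).symm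
      _ = ∫ θ in Set.Icc k 1, (-W θ) :=
          setIntegral_congr_fun measurableSet_Icc
            (fun θ hθ => by rw [hWeq θ (hkIcc hθ)])
  rcases lt_or_eq_of_le hufk0 with hufkpos | hufkzero
  · -- regular case : uf k > 0
    have hIh : 0 ≤ ∫ θ in I1, h θ := by
      have h1 : 0 ≤ uf k * ∫ θ in I1, h θ := le_trans hIU hcmpU
      exact nonneg_of_mul_nonneg_right h1 hufkpos
    exact le_trans (mul_nonneg hWfk0 hIh) hcmpW
  · -- degenerate case : uf k = 0
    have hufk : uf k = 0 := hufkzero.symm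
    have hptw : ∀ θ ∈ I1, uf θ * h θ ≤ 0 := by
      intro θ hθ
      rcases lt_or_ge θ k with hlt | hge
      · have h1 : uf θ ≤ 0 := by
          have := humono hθ hk1 (le_of_lt hlt); linarith
        exact mul_nonpos_iff.mpr (Or.inr ⟨h1, hsign1 θ hθ hlt⟩)
      · have h1 : 0 ≤ uf θ := by
          have := humono hk1 hθ hge; linarith
        exact mul_nonpos_iff.mpr (Or.inl ⟨h1, hsign2 θ hθ hge⟩)
    have hIUz : (∫ θ in I1, uf θ * h θ) = 0 := by
      have h1 : 0 ≤ ∫ θ in I1, -(uf θ * h θ) :=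
        setIntegral_nonneg measurableSet_Icc (fun θ hθ => neg_nonneg.mpr (hptw θ hθ))
      rw [integral_neg] at h1
      linarith
    have hae : (fun θ => uf θ * h θ) =ᵐ[volume.restrict I1] 0 := by
      have hnn : 0 ≤ᵐ[volume.restrict I1] fun θ => -(uf θ * h θ) := by
        filter_upwards [ae_restrict_mem measurableSet_Icc] with θ hθ
        exact neg_nonneg.mpr (hptw θ hθ)
      have hz : ∫ θ in I1, -(uf θ * h θ) = 0 := by rw [integral_neg, hIUz, neg_zero]
      have := (integral_eq_zero_iff_of_nonneg_ae hnn hIuh.neg).mp hz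
      filter_upwards [this] with θ hθ
      simpa [neg_eq_zero] using hθ
    have hknull : ∀ᵐ θ ∂(volume.restrict I1), θ ≠ k := by
      rw [ae_iff]
      have hset : {θ : ℝ | ¬ θ ≠ k} = {k} := by ext x; simp
      rw [hset, Measure.restrict_apply (MeasurableSet.singleton k)]
      exact measure_mono_null Set.inter_subset_left Real.volume_singleton
    have hzero : ∀ θ ∈ I1, θ ≠ k → uf θ ≠ 0 := by
      intro θ hθ hne hz
      rcases lt_or_gt_of_ne hne with hlt | hgt
      · refine hflat θ hθ k hk1 hlt ?_
        intro x hx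
        have hxI : x ∈ I1 := ⟨le_trans hθ.1 hx.1, le_trans hx.2 hk1.2⟩
        have e1 : uf x ≤ 0 := by have := humono hxI hk1 hx.2; linarith
        have e2 : 0 ≤ uf x := by have := humono hθ hxI hx.1; linarith
        linarith
      · refine hflat k hk1 θ hθ hgt ?_
        intro x hx
        have hxI : x ∈ I1 := ⟨le_trans hk1.1 hx.1, le_trans hx.2 hθ.2⟩
        have e1 : uf x ≤ 0 := by have := humono hxI hθ hx.2; linarith
        have e2 : 0 ≤ uf x := by have := humono hk1 hxI hx.1; linarith
        linarith
    have hWae : (fun θ => Wf θ * h θ) =ᵐ[volume.restrict I1] 0 := by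
      filter_upwards [hae, hknull, ae_restrict_mem measurableSet_Icc] with θ e1 e2 e3
      have hh0 : h θ = 0 := by
        rcases mul_eq_zero.mp e1 with h4 | h4
        · exact absurd h4 (hzero θ e3 e2)
        · exact h4
      simp [hh0]
    have hz : (∫ θ in I1, Wf θ * h θ) = 0 := by
      rw [integral_congr_ae hWae]
      simp
    linarith
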